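/- Let N be a positive integer, s, σ : Fin N → ℝ strictly positive, L real with 0 < L ≤ ∑ n, σ[n]. Let μ* be a minimizer of c(μ) = max_n μ[n]/s[n] over the feasible set {μ | ∑ μ[n] = L, 0 ≤ μ[n] ≤ σ[n]}, and let c* = c(μ*). Then for every index n, if μ*[n]/s[n] < c*, then μ*[n] = σ[n]. -/

import Mathlib

open Finset

theorem stmt1 (N : ℕ) (hN : 0 < N) (s σ : Fin N → ℝ)
    (hs : ∀ n, 0 < s n) (hσ : ∀ n, 0 < σ n) (L : ℝ)
    (hL : 0 < L) (hL2 : L ≤ ∑ n, σ n)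
    (μstar : Fin N → ℝ)
    (hfeas : (∑ n, μstar n = L) ∧ ∀ n, 0 ≤ μstar n ∧ μstar n ≤ σ n)
    (hmin : ∀ ν : Fin N → ℝ, (∑ n, ν n = L) → (∀ n, 0 ≤ ν n ∧ ν n ≤ σ n) →
      (⨆ n, μstar n / s n) ≤ ⨆ n, ν n / s n) :
    ∀ n, μstar n / s n < (⨆ m, μstar m / s m) → μstar n = σ n := by
  intro n hn
  by_contra hne
  haveI : NeZero N := ⟨hN.ne'⟩
  haveI : Nonempty (Fin N) := ⟨⟨0, hN⟩⟩
  set f : Fin N → ℝ := fun m => μstar m / s m with hf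
  set c : ℝ := ⨆ m, f m with hc
  have hsup' : (univ : Finset (Fin N)).sup' univ_nonempty f = c :=
    Finset.sup'_univ_eq_ciSup f
  have hle : ∀ m, f m ≤ c := fun m => by
    rw [← hsup']; exact Finset.le_sup' f (mem_univ m)
  have hμn : μstar n < σ n := lt_of_le_of_ne (hfeas.2 n).2 hne
  have hfn0 : 0 ≤ f n := div_nonneg (hfeas.2 n).1 (hs n).le
  have hc0 : 0 < c := lt_of_le_of_lt hfn0 hn
  -- the set of maximizers
  set T : Finset (Fin N) := univ.filter (fun m => f m = c) with hT
  have hTne : T.Nonempty := by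
    obtain ⟨m, _, hm⟩ := Finset.exists_mem_eq_sup' univ_nonempty f
    exact ⟨m, by simp [hT, ← hm, hsup']⟩
  have hnT : n ∉ T := by simp [hT]; exact hn.ne
  set W : ℝ := ∑ m ∈ T, s m with hW
  have hW0 : 0 < W := Finset.sum_pos (fun m _ => hs m) hTne
  -- choose ε
  set ε : ℝ := min (σ n - μstar n) (min ((c - f n) * s n / 2) (c * W / 2)) with hε
  have hε0 : 0 < ε := by
    have h1 : 0 < c - f n := by linarith
    refine lt_min (by linarith) (lt_min (div_pos (mul_pos h1 (hs n)) two_pos) (by positivity))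
  have hε1 : ε ≤ σ n - μstar n := min_le_left _ _
  have hε2 : ε < (c - f n) * s n := lt_of_le_of_lt ((min_le_right _ _).trans (min_le_left _ _)) (by nlinarith [hs n])
  have hε3 : ε < c * W := lt_of_le_of_lt ((min_le_right _ _).trans (min_le_right _ _)) (by nlinarith)
  -- perturbed assignment
  set ν : Fin N → ℝ := fun m =>
    μstar m + (if m = n then ε else 0) - (if m ∈ T then ε * s m / W else 0) with hν
  have hνT : ∀ m ∈ T, ν m = μstar m - ε * s m / W := by
    intro m hm
    have : m ≠ n := fun h => hnT (h ▸ hm)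
    simp [hν, this, hm]
  have hνn : ν n = μstar n + ε := by simp [hν, hnT]
  have hνo : ∀ m, m ∉ T → m ≠ n → ν m = μstar m := by
    intro m hm hmn; simp [hν, hm, hmn]
  have hμT : ∀ m ∈ T, μstar m = c * s m := by
    intro m hm
    have h1 : f m = c := by simpa [hT] using hm
    have h1 : μstar m = c * s m := by rw [← h1]; exact (div_mul_cancel₀ _ (hs m).ne').symm
    linarith
  have hsum : ∑ m, ν m = L := by
    have h1 : ∑ m, (if m = n then ε else 0) = ε := by simp
    have h2 : ∑ m, (if m ∈ T then ε * s m / W else 0) = ε := by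
      rw [Finset.sum_ite_mem, Finset.univ_inter]
      have : ∑ m ∈ T, ε * s m / W = (∑ m ∈ T, s m) * ε / W := by
        rw [← Finset.sum_div, ← Finset.mul_sum, mul_comm]
      rw [this, ← hW]; field_simp
    simp only [hν, Finset.sum_sub_distrib, Finset.sum_add_distrib, h1, h2, hfeas.1]
    ring
  have hfeas' : ∀ m, 0 ≤ ν m ∧ ν m ≤ σ m := by
    intro m
    by_cases hm : m ∈ T
    · rw [hνT m hm]
      constructor
      · have := hμT m hm
        have hsm := hs m
        rw [this]
        rw [sub_nonneg, div_le_iff₀ hW0]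
        nlinarith
      · have : 0 ≤ ε * s m / W := div_nonneg (mul_nonneg hε0.le (hs m).le) hW0.le
        have := (hfeas.2 m).2
        linarith
    · by_cases hmn : m = n
      · subst hmn
        rw [hνn]
        exact ⟨by linarith [(hfeas.2 m).1], by linarith⟩
      · rw [hνo m hm hmn]; exact hfeas.2 m
  -- new max is strictly below c
  have hlt : ∀ m, ν m / s m < c := by
    intro m
    by_cases hm : m ∈ T
    · rw [hνT m hm, hμT m hm]
      have hsm := hs m
      rw [div_lt_iff₀ hsm]
      have : 0 < ε * s m / W := div_pos (mul_pos hε0 (hs m)) hW0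
      linarith
    · by_cases hmn : m = n
      · subst hmn
        rw [hνn, div_lt_iff₀ (hs m)]
        have : f m * s m = μstar m := div_mul_cancel₀ _ (hs m).ne'
        nlinarith
      · rw [hνo m hm hmn]
        have : f m ≠ c := by simpa [hT] using hm
        exact lt_of_le_of_ne (hle m) this
  have hsup2 : (⨆ m, ν m / s m) < c := by
    rw [← Finset.sup'_univ_eq_ciSup]
    obtain ⟨m, _, hm⟩ := Finset.exists_mem_eq_sup' univ_nonempty (fun m => ν m / s m)
    rw [hm]; exact hlt m
  exact absurd (hmin ν hsum hfeas') (not_le.mpr hsup2)
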